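/- Let n ≥ m+2 and let I be an independent set of P_n^m with min(I) ≤ m+1 and max(I) ≥ n−m. Then γ_gr(P_n^m, I) = max(I) − min(I) + 1 − (|I|−1)·m. -/

import Mathlib

namespace GrundyDom

/-- Closed neighborhood N[v]. -/
def cn {V : Type*} (G : SimpleGraph V) (v : V) : Set V := insert v (G.neighborSet v)

/-- Union of closed neighborhoods of the vertices of a list. -/
def cnUnion {V : Type*} (G : SimpleGraph V) (L : List V) : Set V := ⋃ v ∈ L, cn G v

/-- Private neighborhood of `v` with respect to the first `i` entries of `S`:
`N[v] \ (N[v_1] ∪ ... ∪ N[v_i])`. -/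
def PN {V : Type*} (G : SimpleGraph V) (S : List V) (i : ℕ) (v : V) : Set V :=
  cn G v \ cnUnion G (S.take i)

/-- A legal dominating sequence: distinct vertices, dominating set, and every
vertex of the sequence has a nonempty private neighborhood w.r.t. its predecessors. -/
structure IsLegal {V : Type*} (G : SimpleGraph V) (S : List V) : Prop where
  nodup : S.Nodup
  dominates : ∀ v : V, ∃ u ∈ S, v ∈ cn G u
  legal : ∀ i : Fin S.length, (PN G S i.val (S.get i)).Nonempty

/-- The set `I_S` of vertices that footprint themselves in `S`. -/
def selfFoot {V : Type*} (G : SimpleGraph V) (S : List V) : Set V :=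
  {v | ∃ i : Fin S.length, S.get i = v ∧ v ∈ PN G S i.val v}

/-- Grundy domination number: maximum length of a legal dominating sequence. -/
noncomputable def gammaGr {V : Type*} (G : SimpleGraph V) : ℕ :=
  sSup {k | ∃ S : List V, IsLegal G S ∧ S.length = k}

/-- `γ_gr(G, I)`: maximum length of a legal dominating sequence `S` with `I_S = I`. -/
noncomputable def gammaGrOn {V : Type*} (G : SimpleGraph V) (I : Set V) : ℕ :=
  sSup {k | ∃ S : List V, IsLegal G S ∧ selfFoot G S = I ∧ S.length = k}

/-- `γ_gr^u(G)`: maximum of `γ_gr(G, I)` over independent sets `I` containing `u`. -/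
noncomputable def gammaGrVert {V : Type*} (G : SimpleGraph V) (u : V) : ℕ :=
  sSup {k | ∃ I : Set V, (∀ ⦃a⦄, a ∈ I → ∀ ⦃b⦄, b ∈ I → a ≠ b → ¬ G.Adj a b) ∧
    u ∈ I ∧ k = gammaGrOn G I}

/-- Independent set of a graph. -/
def IsIndep {V : Type*} (G : SimpleGraph V) (I : Set V) : Prop :=
  ∀ ⦃u⦄, u ∈ I → ∀ ⦃v⦄, v ∈ I → u ≠ v → ¬ G.Adj u v

/-- The X-join product `G ↩ 𝓡`: replace each vertex `v` of `G` by the graph `R v`. -/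
def XJoin {V : Type*} (G : SimpleGraph V) {W : V → Type*} (R : ∀ v, SimpleGraph (W v)) :
    SimpleGraph (Σ v, W v) where
  Adj x y := G.Adj x.1 y.1 ∨ ∃ h : x.1 = y.1, (R y.1).Adj (h ▸ x.2) y.2
  symm := by
    constructor
    rintro ⟨a, xa⟩ ⟨b, yb⟩ (h | ⟨h, hadj⟩)
    · exact Or.inl h.symm
    · dsimp at h hadj
      subst h
      exact Or.inr ⟨rfl, hadj.symm⟩
  loopless := by
    constructor
    rintro ⟨a, xa⟩ (h | ⟨h, hadj⟩)
    · exact G.loopless.irrefl a h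
    · exact (R a).loopless.irrefl xa hadj

/-- The lexicographic product `G ∘ H`. -/
def Lex {V W : Type*} (G : SimpleGraph V) (H : SimpleGraph W) : SimpleGraph (V × W) where
  Adj x y := G.Adj x.1 y.1 ∨ (x.1 = y.1 ∧ H.Adj x.2 y.2)
  symm := by
    constructor
    rintro x y (h | ⟨h1, h2⟩)
    · exact Or.inl h.symm
    · exact Or.inr ⟨h1.symm, h2.symm⟩
  loopless := by
    constructor
    rintro x (h | ⟨_, h⟩)
    · exact G.loopless.irrefl _ h
    · exact H.loopless.irrefl _ h

/-- The replacement graph `G_{u ↩ H}`: replace the vertex `u` of `G` by `H`. -/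
def Replace {V : Type*} (G : SimpleGraph V) (u : V) {W : Type*} (H : SimpleGraph W) :
    SimpleGraph ({v : V // v ≠ u} ⊕ W) where
  Adj x y :=
    match x, y with
    | Sum.inl a, Sum.inl b => G.Adj a.1 b.1
    | Sum.inl a, Sum.inr _ => G.Adj a.1 u
    | Sum.inr _, Sum.inl b => G.Adj u b.1
    | Sum.inr h1, Sum.inr h2 => H.Adj h1 h2
  symm := by constructor; rintro (a|a) (b|b) h <;> exact h.symm
  loopless := by constructor; rintro (a|a) h <;> exact h.ne rfl

/-- `C_n^m`: the m-th power of the n-cycle, on vertex set `ZMod n`;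
two vertices are adjacent iff their circular distance is between 1 and m. -/
def cyclePow (n m : ℕ) : SimpleGraph (ZMod n) where
  Adj i j := i ≠ j ∧ ∃ k : ℕ, 1 ≤ k ∧ k ≤ m ∧ (j = i + k ∨ i = j + k)
  symm := by
    constructor
    rintro i j ⟨hne, k, h1, h2, h3⟩
    exact ⟨hne.symm, k, h1, h2, h3.symm⟩
  loopless := ⟨fun i h => h.1 rfl⟩

/-- `P_n^m`: the m-th power of the n-path, on vertex set `Fin n`
(vertex `i` represents the `(i+1)`-st vertex of the path);
two vertices adjacent iff their distance is between 1 and m. -/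
def pathPow (n m : ℕ) : SimpleGraph (Fin n) where
  Adj i j := i ≠ j ∧ Nat.dist i.val j.val ≤ m
  symm := by
    constructor
    rintro i j ⟨hne, hd⟩
    exact ⟨hne.symm, by rwa [Nat.dist_comm]⟩
  loopless := ⟨fun i h => h.1 rfl⟩

end GrundyDom

open GrundyDom Finset

section Aux
variable {n m : ℕ}

lemma mem_cn_iff {v w : Fin n} : w ∈ cn (pathPow n m) v ↔ Nat.dist v.val w.val ≤ m := by
  simp only [cn, Set.mem_insert_iff, SimpleGraph.mem_neighborSet, pathPow]
  constructor
  · rintro (rfl | ⟨_, h⟩)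
    · simp [Nat.dist_self]
    · exact h
  · intro h
    by_cases hvw : w = v
    · exact Or.inl hvw
    · exact Or.inr ⟨fun e => hvw e.symm, h⟩

lemma mem_cnUnion_iff {L : List (Fin n)} {w : Fin n} :
    w ∈ cnUnion (pathPow n m) L ↔ ∃ u ∈ L, Nat.dist u.val w.val ≤ m := by
  simp only [cnUnion, Set.mem_iUnion, exists_prop]
  exact exists_congr fun u => and_congr_right fun _ => mem_cn_iff

lemma dist_le_iff {a b k : ℕ} : Nat.dist a b ≤ k ↔ a ≤ b + k ∧ b ≤ a + k := by
  unfold Nat.dist; omega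

lemma mem_take_iff {α : Type*} {S : List α} {t : ℕ} {u : α} :
    u ∈ S.take t ↔ ∃ j : Fin S.length, j.val < t ∧ S.get j = u := by
  constructor
  · intro h
    obtain ⟨j, hj, hval⟩ := List.mem_iff_getElem.1 h
    rw [List.length_take] at hj
    refine ⟨⟨j, by omega⟩, by simpa using (by omega : j < t), ?_⟩
    rw [← hval, List.getElem_take]
    rfl
  · rintro ⟨j, hj, rfl⟩
    have : (S.take t)[j.val]'(by rw [List.length_take]; omega) = S.get j := by
      rw [List.getElem_take]; rfl
    rw [← this]
    exact List.getElem_mem _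

lemma card_filter_val {A : Finset ℕ} (hA : ∀ a ∈ A, a < n) :
    (Finset.univ.filter fun x : Fin n => x.val ∈ A).card = A.card := by
  refine Finset.card_bij (fun x _ => x.val) (fun x hx => (Finset.mem_filter.1 hx).2)
    (fun x _ y _ h => Fin.val_injective h) (fun a ha => ⟨⟨a, hA a ha⟩, by simp [ha], rfl⟩)

end Aux
section Lower
variable {n m : ℕ} (I : Finset (Fin n)) (hne : I.Nonempty)

/-- membership predicate for the canonical optimal sequence -/
def good (m : ℕ) (I : Finset (Fin n)) (hne : I.Nonempty) (x : Fin n) : Prop :=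
  I.min' hne ≤ x ∧ x ≤ I.max' hne ∧
    (x ∈ I ∨ ∀ y ∈ I, ¬(x.val < y.val ∧ y.val ≤ x.val + m))

instance : DecidablePred (good m I hne) := fun x => by unfold good; infer_instance

def seqS (m : ℕ) (I : Finset (Fin n)) (hne : I.Nonempty) : List (Fin n) :=
  (List.finRange n).filter (fun x => decide (good m I hne x))

lemma mem_seqS {x : Fin n} : x ∈ seqS m I hne ↔ good m I hne x := by
  simp [seqS, List.mem_filter]

lemma seqS_sorted : (seqS m I hne).Pairwise (· < ·) :=
  (List.pairwise_lt_finRange n).sublist List.filter_sublist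

lemma seqS_nodup : (seqS m I hne).Nodup :=
  (List.nodup_finRange n).filter _

lemma seqS_lt_of_mem_take {i : Fin (seqS m I hne).length} {u : Fin n}
    (hu : u ∈ (seqS m I hne).take i.val) : u < (seqS m I hne).get i := by
  obtain ⟨j, hj, rfl⟩ := mem_take_iff.1 hu
  exact List.pairwise_iff_get.1 (seqS_sorted I hne) j i (by exact hj)

lemma seqS_mem_take {i : Fin (seqS m I hne).length} {u : Fin n}
    (hu : u ∈ seqS m I hne) (hlt : u < (seqS m I hne).get i) :
    u ∈ (seqS m I hne).take i.val := by
  obtain ⟨j, rfl⟩ := List.mem_iff_get.1 hu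
  refine mem_take_iff.2 ⟨j, ?_, rfl⟩
  by_contra hj
  rcases eq_or_lt_of_le (le_of_not_gt (fun h : (j:ℕ) < i => hj h)) with h | h
  · have : i = j := Fin.val_injective h
    subst this
    exact absurd rfl hlt.ne
  · exact absurd (List.pairwise_iff_get.1 (seqS_sorted I hne) i j h) (by
      intro hc; exact absurd (hc.trans hlt) (lt_irrefl _))

end Lower
section Lower2
variable {n m : ℕ} {I : Finset (Fin n)} {hne : I.Nonempty}

theorem seqS_legal (hm : 1 ≤ m) (hn : m + 2 ≤ n) (hind : IsIndep (pathPow n m) ↑I)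
    (hmin : (I.min' hne).val ≤ m) (hmax : n ≤ (I.max' hne).val + 1 + m) :
    IsLegal (pathPow n m) (seqS m I hne) ∧ selfFoot (pathPow n m) (seqS m I hne) = ↑I := by
  set a1 := I.min' hne with ha1
  set ak := I.max' hne with hak
  set S := seqS m I hne with hSdef
  have hmemS : ∀ x : Fin n, x ∈ S ↔ good m I hne x := fun x => mem_seqS I hne
  have hget_mem : ∀ i : Fin S.length, good m I hne (S.get i) := fun i =>
    (hmemS _).1 (by simpa using List.get_mem S i.val i.isLt)
  have hgap : ∀ y ∈ I, ∀ z ∈ I, y ≠ z → m + 1 ≤ Nat.dist y.val z.val := by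
    intro y hy z hz hyz
    by_contra h
    exact hind hy hz hyz (show y ≠ z ∧ Nat.dist y.val z.val ≤ m from ⟨hyz, by omega⟩)
  have hgoodI : ∀ y ∈ I, good m I hne y := fun y hy =>
    ⟨Finset.min'_le I y hy, Finset.le_max' I y hy, Or.inl hy⟩
  have hnc : ∀ i : Fin S.length, S.get i ∈ I →
      S.get i ∉ cnUnion (pathPow n m) (S.take i.val) := by
    intro i hxI hcov
    obtain ⟨u, hu_take, hud⟩ := mem_cnUnion_iff.1 hcov
    have hu_lt : u < S.get i := seqS_lt_of_mem_take I hne hu_take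
    have hu_good := (hmemS u).1 (List.mem_of_mem_take hu_take)
    have hlt : u.val < (S.get i).val := hu_lt
    rcases hu_good.2.2 with huI | hunb
    · have := hgap u huI _ hxI (ne_of_lt hu_lt)
      rw [dist_le_iff] at hud
      unfold Nat.dist at this
      omega
    · refine hunb _ hxI ⟨hlt, ?_⟩
      rw [dist_le_iff] at hud
      omega
  have hlegal : ∀ i : Fin S.length, (PN (pathPow n m) S i.val (S.get i)).Nonempty := by
    intro i
    by_cases hxI : S.get i ∈ I
    · exact ⟨S.get i, ⟨mem_cn_iff.2 (by simp [Nat.dist_self]), hnc i hxI⟩⟩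
    · have hxgood : good m I hne (S.get i) := hget_mem i
      have hxak : (S.get i).val < ak.val := by
        have hle : (S.get i).val ≤ ak.val := hxgood.2.1
        have hne' : S.get i ≠ ak := fun h => hxI (h ▸ Finset.max'_mem I hne)
        exact lt_of_le_of_ne hle (fun h => hne' (Fin.val_injective h))
      have hnb : ∀ y ∈ I, ¬((S.get i).val < y.val ∧ y.val ≤ (S.get i).val + m) := by
        rcases hxgood.2.2 with h | h
        · exact absurd h hxI
        · exact h
      have hxm : (S.get i).val + m < ak.val := by
        by_contra hc
        push_neg at hc
        exact hnb ak (Finset.max'_mem I hne) ⟨hxak, hc⟩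
      have hxm' : (S.get i).val + m < n := lt_trans hxm ak.isLt
      refine ⟨⟨(S.get i).val + m, hxm'⟩, ⟨mem_cn_iff.2 (by simp [dist_le_iff]; omega), ?_⟩⟩
      intro hcov
      obtain ⟨u, hu_take, hud⟩ := mem_cnUnion_iff.1 hcov
      have hu_lt : u.val < (S.get i).val := seqS_lt_of_mem_take I hne hu_take
      rw [dist_le_iff] at hud
      simp only [Fin.val_mk] at hud
      omega
  have hdom : ∀ v : Fin n, ∃ u ∈ S, v ∈ cn (pathPow n m) u := by
    intro v
    by_cases h1 : v.val ≤ a1.val + m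
    · refine ⟨a1, (hmemS a1).2 (hgoodI a1 (Finset.min'_mem I hne)), mem_cn_iff.2 ?_⟩
      rw [dist_le_iff]
      omega
    · push_neg at h1
      by_cases h2 : ∃ y ∈ I, y.val ≤ v.val ∧ v.val ≤ y.val + m
      · obtain ⟨y, hy, hy1, hy2⟩ := h2
        exact ⟨y, (hmemS y).2 (hgoodI y hy), mem_cn_iff.2 (by rw [dist_le_iff]; omega)⟩
      · push_neg at h2
        have hvn : v.val - m < n := by omega
        refine ⟨⟨v.val - m, hvn⟩, (hmemS _).2 ?_, mem_cn_iff.2 (by simp [dist_le_iff]; omega)⟩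
        have hakv : v.val - m ≤ ak.val := by
          have := v.isLt
          omega
        refine ⟨?_, ?_, Or.inr ?_⟩
        · show a1 ≤ (⟨v.val - m, hvn⟩ : Fin n)
          rw [Fin.le_def]
          simp only [Fin.val_mk]
          omega
        · show (⟨v.val - m, hvn⟩ : Fin n) ≤ ak
          rw [Fin.le_def]
          simpa using hakv
        · rintro y hy ⟨hy1, hy2⟩
          simp only [Fin.val_mk] at hy1 hy2
          exact absurd (h2 y hy (by omega)) (by omega)
  have hsf : selfFoot (pathPow n m) S = ↑I := by
    ext v
    simp only [selfFoot, Set.mem_setOf_eq, Finset.coe_sort_coe, Finset.mem_coe]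
    constructor
    · rintro ⟨i, hgi, hPN⟩
      by_contra hvI
      have hvgood : good m I hne v := hgi ▸ hget_mem i
      have hnb : ∀ y ∈ I, ¬(v.val < y.val ∧ y.val ≤ v.val + m) := by
        rcases hvgood.2.2 with h | h
        · exact absurd h hvI
        · exact h
      have hva1 : a1.val < v.val := by
        have h1 : a1.val ≤ v.val := hvgood.1
        have h2 : v ≠ a1 := fun h => hvI (h ▸ Finset.min'_mem I hne)
        exact lt_of_le_of_ne h1 (fun h => h2 (Fin.val_injective h.symm))
      have hcov : v ∈ cnUnion (pathPow n m) (S.take i.val) := by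
        by_cases h2 : ∃ y ∈ I, y.val < v.val ∧ v.val ≤ y.val + m
        · obtain ⟨y, hy, hy1, hy2⟩ := h2
          have hymem : y ∈ S := (hmemS y).2 (hgoodI y hy)
          have hytake : y ∈ S.take i.val := seqS_mem_take I hne hymem (by
            rw [Fin.lt_def, hgi]; exact hy1)
          exact mem_cnUnion_iff.2 ⟨y, hytake, by rw [dist_le_iff]; omega⟩
        · push_neg at h2
          have hun : v.val - 1 < n := by omega
          have hugood : good m I hne ⟨v.val - 1, hun⟩ := by
            refine ⟨?_, ?_, Or.inr ?_⟩
            · show a1 ≤ (⟨v.val - 1, hun⟩ : Fin n)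
              rw [Fin.le_def]
              simp only [Fin.val_mk]
              omega
            · show (⟨v.val - 1, hun⟩ : Fin n) ≤ ak
              rw [Fin.le_def]
              simp only [Fin.val_mk]
              have : v.val ≤ ak.val := hvgood.2.1
              omega
            · rintro z hz ⟨hz1, hz2⟩
              simp only [Fin.val_mk] at hz1 hz2
              rcases lt_trichotomy z.val v.val with h | h | h
              · exact absurd (h2 z hz h) (by omega)
              · exact hvI (by rwa [show z = v from Fin.val_injective h] at hz)
              · exact hnb z hz ⟨h, by omega⟩
          have humem : (⟨v.val - 1, hun⟩ : Fin n) ∈ S := (hmemS _).2 hugood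
          have hutake : (⟨v.val - 1, hun⟩ : Fin n) ∈ S.take i.val :=
            seqS_mem_take I hne humem (by
              rw [Fin.lt_def, hgi]
              simp only [Fin.val_mk]
              omega)
          refine mem_cnUnion_iff.2 ⟨_, hutake, ?_⟩
          rw [dist_le_iff]
          simp only [Fin.val_mk]
          omega
      exact hPN.2 hcov
    · intro hvI
      have hvS : v ∈ S := (hmemS v).2 (hgoodI v hvI)
      obtain ⟨i, hi⟩ := List.mem_iff_get.1 hvS
      refine ⟨i, hi, ⟨mem_cn_iff.2 (by simp [Nat.dist_self]), ?_⟩⟩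
      rw [← hi]
      exact hnc i (by rw [hi]; exact hvI)
  exact ⟨⟨seqS_nodup I hne, hdom, hlegal⟩, hsf⟩

end Lower2
section Lower3
variable {n m : ℕ} {I : Finset (Fin n)} {hne : I.Nonempty}

theorem seqS_length (hind : IsIndep (pathPow n m) ↑I) :
    ((seqS m I hne).length : ℤ) =
      ((I.max' hne).val : ℤ) - ((I.min' hne).val : ℤ) + 1 - ((I.card : ℤ) - 1) * m := by
  set a1 := I.min' hne with ha1
  set ak := I.max' hne with hak
  have hgap : ∀ y ∈ I, ∀ z ∈ I, y ≠ z → m + 1 ≤ Nat.dist y.val z.val := by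
    intro y hy z hz hyz
    by_contra h
    exact hind hy hz hyz (show y ≠ z ∧ Nat.dist y.val z.val ≤ m from ⟨hyz, by omega⟩)
  have ha1ak : a1.val ≤ ak.val := Finset.min'_le I ak (Finset.max'_mem I hne)
  have hgapy : ∀ y ∈ I, y ≠ a1 → a1.val + m + 1 ≤ y.val := by
    intro y hy hya1
    have h1 := hgap a1 (Finset.min'_mem I hne) y hy (fun h => hya1 h.symm)
    have h2 : a1.val ≤ y.val := Finset.min'_le I y hy
    unfold Nat.dist at h1
    omega
  have hlen1 : (seqS m I hne).length = (Finset.univ.filter (good m I hne)).card := by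
    rw [← List.toFinset_card_of_nodup (seqS_nodup I hne)]
    congr 1
    ext x
    simp [List.mem_toFinset, mem_seqS]
  set A := Finset.univ.filter (fun x : Fin n => a1.val ≤ x.val ∧ x.val ≤ ak.val) with hA
  set B := Finset.univ.filter (fun x : Fin n =>
    (a1.val ≤ x.val ∧ x.val ≤ ak.val) ∧ ∃ y ∈ I, x.val < y.val ∧ y.val ≤ x.val + m) with hB
  have hgood_eq : Finset.univ.filter (good m I hne) = A \ B := by
    ext x
    simp only [hA, hB, Finset.mem_sdiff, Finset.mem_filter, Finset.mem_univ, true_and]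
    constructor
    · rintro ⟨h1, h2, h3⟩
      have hb1 : a1.val ≤ x.val := h1
      have hb2 : x.val ≤ ak.val := h2
      refine ⟨⟨hb1, hb2⟩, ?_⟩
      rintro ⟨-, y, hy, hxy, hyxm⟩
      rcases h3 with hxI | hnb
      · have := hgap x hxI y hy (fun h => by rw [h] at hxy; omega)
        unfold Nat.dist at this
        omega
      · exact hnb y hy ⟨hxy, hyxm⟩
    · rintro ⟨⟨h1, h2⟩, h3⟩
      push_neg at h3
      refine ⟨h1, h2, Or.inr ?_⟩
      rintro y hy ⟨hy1, hy2⟩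
      rcases h3 ⟨h1, h2⟩ with h4
      exact absurd hy2 (by have := h4 y hy hy1; omega)
  have hBA : B ⊆ A := by
    intro x hx
    simp only [hA, hB, Finset.mem_filter, Finset.mem_univ, true_and] at hx ⊢
    exact hx.1
  have hcardA : A.card = ak.val + 1 - a1.val := by
    have : A = Finset.univ.filter (fun x : Fin n => x.val ∈ Finset.Icc a1.val ak.val) := by
      ext x
      simp [hA, Finset.mem_Icc]
    rw [this, card_filter_val (fun a ha => by
      have := (Finset.mem_Icc.1 ha).2
      exact lt_of_le_of_lt this ak.isLt), Nat.card_Icc]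
  have hBbi : B = (I.erase a1).biUnion (fun y =>
      Finset.univ.filter (fun x : Fin n => y.val ≤ x.val + m ∧ x.val < y.val)) := by
    ext x
    simp only [hB, Finset.mem_filter, Finset.mem_univ, true_and, Finset.mem_biUnion,
      Finset.mem_erase]
    constructor
    · rintro ⟨⟨hx1, hx2⟩, y, hy, hxy, hyxm⟩
      exact ⟨y, ⟨fun h => by rw [h] at hxy; simp only [ha1] at hxy; omega, hy⟩, hyxm, hxy⟩
    · rintro ⟨y, ⟨hyne, hyI⟩, h1, h2⟩
      have hy3 := hgapy y hyI hyne
      have hy4 : y.val ≤ ak.val := Finset.le_max' I y hyI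
      exact ⟨⟨by omega, by omega⟩, y, hyI, h2, h1⟩
  have hcardB : B.card = (I.card - 1) * m := by
    rw [hBbi, Finset.card_biUnion]
    · have hinner : ∀ y ∈ I.erase a1,
          (Finset.univ.filter (fun x : Fin n => y.val ≤ x.val + m ∧ x.val < y.val)).card = m := by
        intro y hy
        obtain ⟨hyne, hyI⟩ := Finset.mem_erase.1 hy
        have hy3 := hgapy y hyI hyne
        have : (Finset.univ.filter (fun x : Fin n => y.val ≤ x.val + m ∧ x.val < y.val))
            = Finset.univ.filter (fun x : Fin n => x.val ∈ Finset.Ico (y.val - m) y.val) := by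
          ext x
          simp only [Finset.mem_filter, Finset.mem_univ, true_and, Finset.mem_Ico]
          omega
        rw [this, card_filter_val (fun a ha => by
          have := (Finset.mem_Ico.1 ha).2
          exact lt_trans this y.isLt), Nat.card_Ico]
        omega
      rw [Finset.sum_congr rfl hinner, Finset.sum_const, smul_eq_mul,
        Finset.card_erase_of_mem (Finset.min'_mem I hne)]
    · intro y hy z hz hyz
      obtain ⟨hyne, hyI⟩ := Finset.mem_erase.1 hy
      obtain ⟨hzne, hzI⟩ := Finset.mem_erase.1 hz
      have hd := hgap y hyI z hzI hyz
      unfold Nat.dist at hd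
      rw [Function.onFun, Finset.disjoint_left]
      intro x hx hx2
      simp only [Finset.mem_filter, Finset.mem_univ, true_and] at hx hx2
      omega
  have hk1 : 1 ≤ I.card := Finset.card_pos.2 hne
  rw [hlen1, hgood_eq, Finset.card_sdiff_of_subset hBA, hcardA, hcardB]
  have hle : (I.card - 1) * m ≤ ak.val + 1 - a1.val := by
    have : B.card ≤ A.card := Finset.card_le_card hBA
    rw [hcardA, hcardB] at this
    exact this
  push_cast [Nat.cast_sub (by omega : a1.val ≤ ak.val + 1), Nat.cast_sub hle, Nat.cast_sub hk1]
  ring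
end Lower3
section Upper
variable {n m : ℕ}

def predI (I : Finset (Fin n)) (c : Fin n) : Fin n :=
  if h : (I.filter (· < c)).Nonempty then (I.filter (· < c)).max' h else c

def succI (I : Finset (Fin n)) (c : Fin n) : Fin n :=
  if h : (I.filter (c < ·)).Nonempty then (I.filter (c < ·)).min' h else c

lemma predI_spec {I : Finset (Fin n)} (hne : I.Nonempty) {c : Fin n} (hc : c ∈ I)
    (hc1 : c ≠ I.min' hne) :
    predI I c ∈ I ∧ predI I c < c ∧ ∀ z ∈ I, z < c → z ≤ predI I c := by
  have hmem : I.min' hne ∈ I.filter (· < c) := Finset.mem_filter.2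
    ⟨Finset.min'_mem I hne, lt_of_le_of_ne (Finset.min'_le I c hc) (fun h => hc1 h.symm)⟩
  have hnem : (I.filter (· < c)).Nonempty := ⟨_, hmem⟩
  have hmm := Finset.max'_mem (I.filter (· < c)) hnem
  rw [Finset.mem_filter] at hmm
  unfold predI
  rw [dif_pos hnem]
  exact ⟨hmm.1, hmm.2,
    fun z hz hzc => Finset.le_max' (I.filter (· < c)) z (Finset.mem_filter.2 ⟨hz, hzc⟩)⟩

lemma succI_spec {I : Finset (Fin n)} (hne : I.Nonempty) {c : Fin n} (hc : c ∈ I)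
    (hc2 : c ≠ I.max' hne) :
    succI I c ∈ I ∧ c < succI I c ∧ ∀ z ∈ I, c < z → succI I c ≤ z := by
  have hmem : I.max' hne ∈ I.filter (c < ·) := Finset.mem_filter.2
    ⟨Finset.max'_mem I hne, lt_of_le_of_ne (Finset.le_max' I c hc) hc2⟩
  have hnem : (I.filter (c < ·)).Nonempty := ⟨_, hmem⟩
  have hmm := Finset.min'_mem (I.filter (c < ·)) hnem
  rw [Finset.mem_filter] at hmm
  unfold succI
  rw [dif_pos hnem]
  exact ⟨hmm.1, hmm.2,
    fun z hz hzc => Finset.min'_le (I.filter (c < ·)) z (Finset.mem_filter.2 ⟨hz, hzc⟩)⟩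

lemma succI_predI {I : Finset (Fin n)} (hne : I.Nonempty) {c : Fin n} (hc : c ∈ I)
    (hc1 : c ≠ I.min' hne) : succI I (predI I c) = c := by
  obtain ⟨hbI, hbc, hbmax⟩ := predI_spec hne hc hc1
  have hmem : c ∈ I.filter (predI I c < ·) := Finset.mem_filter.2 ⟨hc, hbc⟩
  have hnem : (I.filter (predI I c < ·)).Nonempty := ⟨_, hmem⟩
  unfold succI
  rw [dif_pos hnem]
  refine le_antisymm (Finset.min'_le _ _ hmem) ?_
  by_contra h
  push_neg at h
  have h2 := Finset.min'_mem (I.filter (predI I c < ·)) hnem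
  rw [Finset.mem_filter] at h2
  exact absurd (hbmax _ h2.1 h) (not_le.2 h2.2)

lemma predI_succI {I : Finset (Fin n)} (hne : I.Nonempty) {y : Fin n} (hy : y ∈ I)
    (hy2 : y ≠ I.max' hne) : predI I (succI I y) = y := by
  obtain ⟨hcI, hyc, hcmin⟩ := succI_spec hne hy hy2
  have hmem : y ∈ I.filter (· < succI I y) := Finset.mem_filter.2 ⟨hy, hyc⟩
  have hnem : (I.filter (· < succI I y)).Nonempty := ⟨_, hmem⟩
  unfold predI
  rw [dif_pos hnem]
  refine le_antisymm ?_ (Finset.le_max' _ _ hmem)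
  by_contra h
  push_neg at h
  have h2 := Finset.max'_mem (I.filter (· < succI I y)) hnem
  rw [Finset.mem_filter] at h2
  exact absurd (hcmin _ h2.1 h) (not_le.2 h2.2)

theorem upper_bound (hm : 1 ≤ m) (hn : m + 2 ≤ n) (I : Finset (Fin n)) (hne : I.Nonempty)
    (hind : IsIndep (pathPow n m) ↑I)
    (hmin : (I.min' hne).val ≤ m) (hmax : n ≤ (I.max' hne).val + 1 + m)
    (S : List (Fin n)) (hS : IsLegal (pathPow n m) S)
    (hsf : selfFoot (pathPow n m) S = ↑I) :
    (S.length : ℤ) ≤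
      ((I.max' hne).val : ℤ) - ((I.min' hne).val : ℤ) + 1 - ((I.card : ℤ) - 1) * m := by
  classical
  set a1 := I.min' hne with ha1
  set ak := I.max' hne with hak
  have hgap : ∀ y ∈ I, ∀ z ∈ I, y ≠ z → m + 1 ≤ Nat.dist y.val z.val := by
    intro y hy z hz hyz
    by_contra h
    exact hind hy hz hyz (show y ≠ z ∧ Nat.dist y.val z.val ≤ m from ⟨hyz, by omega⟩)
  set Cov : ℕ → Fin n → Prop :=
    fun t w => ∃ j : Fin S.length, j.val < t ∧ Nat.dist (S.get j).val w.val ≤ m with hCovDef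
  have hCov_iff : ∀ (t : ℕ) (w : Fin n),
      w ∈ cnUnion (pathPow n m) (S.take t) ↔ Cov t w := by
    intro t w
    rw [mem_cnUnion_iff, hCovDef]
    constructor
    · rintro ⟨u, hu, hd⟩
      obtain ⟨j, hj, rfl⟩ := mem_take_iff.1 hu
      exact ⟨j, hj, hd⟩
    · rintro ⟨j, hj, hd⟩
      exact ⟨S.get j, mem_take_iff.2 ⟨j, hj, rfl⟩, hd⟩
  have hfoot : ∀ c ∈ I, ∃ i : Fin S.length, S.get i = c ∧ ¬ Cov i.val c := by
    intro c hc
    have hcs : c ∈ selfFoot (pathPow n m) S := by rw [hsf]; exact hc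
    obtain ⟨i, h1, h2⟩ := hcs
    exact ⟨i, h1, fun hcov => h2.2 ((hCov_iff i.val c).2 hcov)⟩
  choose idx hidx1 hidx2 using hfoot
  have hgetinj : ∀ i j : Fin S.length, S.get i = S.get j → i = j := by
    intro i j h
    exact (List.Nodup.get_inj_iff hS.nodup).1 h
  have hF2 : ∀ c (hc : c ∈ I) (t : Fin S.length), S.get t ≠ c →
      Nat.dist (S.get t).val c.val ≤ m → idx c hc < t := by
    intro c hc t hne' hd
    rcases lt_trichotomy (idx c hc) t with h | h | h
    · exact h
    · exact absurd (h ▸ hidx1 c hc) hne'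
    · exact absurd ⟨t, h, hd⟩ (hidx2 c hc)
  set fpF : Fin S.length → Finset (Fin n) := fun i =>
    Finset.univ.filter (fun w => Nat.dist (S.get i).val w.val ≤ m ∧ ¬ Cov i.val w) with hfpFdef
  have hfpF_mem : ∀ (i : Fin S.length) (w : Fin n),
      w ∈ fpF i ↔ Nat.dist (S.get i).val w.val ≤ m ∧ ¬ Cov i.val w := by
    intro i w
    simp [hfpFdef]
  have hfp_ne : ∀ i : Fin S.length, ∃ w, w ∈ fpF i := by
    intro i
    obtain ⟨w, hw1, hw2⟩ := hS.legal i
    exact ⟨w, (hfpF_mem i w).2 ⟨mem_cn_iff.1 hw1, fun hcov => hw2 ((hCov_iff i.val w).2 hcov)⟩⟩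
  have hfp_disj : ∀ i j : Fin S.length, i ≠ j → Disjoint (fpF i) (fpF j) := by
    intro i j hij
    rw [Finset.disjoint_left]
    intro w hwi hwj
    rw [hfpF_mem] at hwi hwj
    rcases lt_or_gt_of_ne hij with h | h
    · exact hwj.2 ⟨i, h, hwi.1⟩
    · exact hwi.2 ⟨j, h, hwj.1⟩
  have hple : ∀ i : Fin S.length, (S.get i).val ≤ ak.val := by
    intro i
    by_contra h
    push_neg at h
    obtain ⟨w, hw⟩ := hfp_ne i
    rw [hfpF_mem] at hw
    have hgi := (S.get i).isLt
    have hwlt := w.isLt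
    rw [dist_le_iff] at hw
    have h1 : idx ak (Finset.max'_mem I hne) < i := by
      refine hF2 ak _ i (fun he => by rw [he] at h; omega) ?_
      rw [dist_le_iff]
      omega
    exact hw.2 ⟨idx ak (Finset.max'_mem I hne), h1, by
      rw [hidx1, dist_le_iff]
      omega⟩
  have hκex : ∀ i : Fin S.length, (I.filter (fun y => S.get i ≤ y)).Nonempty := fun i =>
    ⟨ak, Finset.mem_filter.2 ⟨Finset.max'_mem I hne, Fin.le_def.2 (hple i)⟩⟩
  set κ : Fin S.length → Fin n := fun i => (I.filter (fun y => S.get i ≤ y)).min' (hκex i)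
    with hκdef
  have hκI : ∀ i, κ i ∈ I := fun i => (Finset.mem_filter.1 (Finset.min'_mem _ (hκex i))).1
  have hκge : ∀ i, S.get i ≤ κ i := fun i => (Finset.mem_filter.1 (Finset.min'_mem _ (hκex i))).2
  have hκle : ∀ i, ∀ y ∈ I, S.get i ≤ y → κ i ≤ y := fun i y hy hle =>
    Finset.min'_le _ _ (Finset.mem_filter.2 ⟨hy, hle⟩)
  -- the fiber over the minimum has at most one element
  have hfa1 : (Finset.univ.filter (fun i => κ i = a1)).card ≤ 1 := by
    have hkey : ∀ i : Fin S.length, κ i = a1 → i = idx a1 (Finset.min'_mem I hne) := by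
      intro i hκi
      have hge : S.get i ≤ a1 := hκi ▸ hκge i
      by_cases hcase : S.get i = a1
      · exact hgetinj _ _ (hcase.trans (hidx1 a1 (Finset.min'_mem I hne)).symm)
      · exfalso
        have hlt : (S.get i).val < a1.val :=
          lt_of_le_of_ne hge (fun h => hcase (Fin.val_injective h))
        obtain ⟨w, hw⟩ := hfp_ne i
        rw [hfpF_mem] at hw
        rw [dist_le_iff] at hw
        have h1 : idx a1 (Finset.min'_mem I hne) < i := by
          refine hF2 a1 _ i hcase ?_
          rw [dist_le_iff]
          omega
        exact hw.2 ⟨idx a1 (Finset.min'_mem I hne), h1, by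
          rw [hidx1, dist_le_iff]
          omega⟩
    rw [Finset.card_le_one]
    intro i hi j hj
    rw [Finset.mem_filter] at hi hj
    rw [hkey i hi.2, hkey j hj.2]
  -- the window lemma
  have hwin : ∀ c (hc : c ∈ I), c ≠ a1 →
      (Finset.univ.filter (fun i => κ i = c)).card + m + (predI I c).val ≤ c.val := by
    intro c hc hca1
    obtain ⟨hbI, hbc, hbmax⟩ := predI_spec hne hc hca1
    set b := predI I c with hbdef
    have hbcv : b.val < c.val := hbc
    have hgapbc : b.val + m + 1 ≤ c.val := by
      have := hgap b hbI c hc (ne_of_lt hbc)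
      unfold Nat.dist at this
      omega
    set Q := Finset.univ.filter (fun i => κ i = c) with hQdef
    have hQmem : ∀ i : Fin S.length, i ∈ Q ↔ κ i = c := by
      intro i
      simp [hQdef]
    have hκidx : ∀ (d : Fin n) (hd : d ∈ I), κ (idx d hd) = d := by
      intro d hd
      refine le_antisymm (hκle _ d hd (le_of_eq (hidx1 d hd))) ?_
      have h := hκge (idx d hd)
      rwa [hidx1 d hd] at h
    have hidxcQ : idx c hc ∈ Q := (hQmem _).2 (hκidx c hc)
    set T := insert (idx b hbI) Q with hTdef
    have hbnotinQ : idx b hbI ∉ Q := by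
      rw [hQmem, hκidx b hbI]
      exact ne_of_lt hbc
    have hTne : T.Nonempty := ⟨idx c hc, Finset.mem_insert_of_mem hidxcQ⟩
    set i0 := T.min' hTne with hi0def
    have hi0T : i0 ∈ T := Finset.min'_mem T hTne
    have hi0le : ∀ i ∈ T, i0 ≤ i := fun i hi => Finset.min'_le T i hi
    have hi0b : i0 ≤ idx b hbI := hi0le _ (Finset.mem_insert_self _ _)
    have hi0c : i0 ≤ idx c hc := hi0le _ (Finset.mem_insert_of_mem hidxcQ)
    have hQget : ∀ i ∈ Q, b.val < (S.get i).val ∧ (S.get i).val ≤ c.val := by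
      intro i hi
      have hκi : κ i = c := (hQmem i).1 hi
      constructor
      · by_contra h
        push_neg at h
        have h2 : κ i ≤ b := hκle i b hbI (Fin.le_def.2 h)
        rw [hκi] at h2
        exact absurd hbc (not_lt.2 h2)
      · exact Fin.le_def.1 (hκi ▸ hκge i)
    have hB1 : ∀ w : Fin n, b.val ≤ w.val → w.val ≤ c.val → ¬ Cov i0.val w := by
      rintro w hwb hwc ⟨t, ht, hdist⟩
      rw [dist_le_iff] at hdist
      rcases lt_trichotomy (S.get t).val b.val with h | h | h
      · have h1 : idx b hbI < t := by
          refine hF2 b hbI t (fun he => by rw [he] at h; omega) ?_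
          rw [dist_le_iff]
          omega
        have : (idx b hbI : ℕ) < i0.val := lt_trans (Fin.lt_def.1 h1) ht
        exact absurd (Fin.lt_def.2 this) (not_lt.2 hi0b)
      · have hub : S.get t = b := Fin.val_injective h
        have : t = idx b hbI := hgetinj _ _ (hub.trans (hidx1 b hbI).symm)
        rw [this] at ht
        exact absurd (Fin.lt_def.2 (lt_of_lt_of_le ht (Fin.le_def.1 (le_refl i0))))
          (not_lt.2 hi0b)
      · rcases le_or_gt (S.get t).val c.val with h2 | h2
        · have hκt : κ t = c := by
            refine le_antisymm (hκle t c hc (Fin.le_def.2 h2)) ?_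
            by_contra hcon
            push_neg at hcon
            have h3 : κ t ≤ b := hbmax _ (hκI t) hcon
            have h4 : (S.get t).val ≤ b.val := Fin.le_def.1 (le_trans (hκge t) h3)
            omega
          have : t ∈ Q := (hQmem t).2 hκt
          have h5 : i0 ≤ t := hi0le _ (Finset.mem_insert_of_mem this)
          exact absurd ht (not_lt.2 (Fin.le_def.1 h5))
        · have h1 : idx c hc < t := by
            refine hF2 c hc t (fun he => by rw [he] at h2; omega) ?_
            rw [dist_le_iff]
            omega
          have : (idx c hc : ℕ) < i0.val := lt_trans (Fin.lt_def.1 h1) ht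
          exact absurd (Fin.lt_def.2 this) (not_lt.2 hi0c)
    set Vfin := Finset.univ.filter (fun w : Fin n => b.val < w.val ∧ w.val ≤ c.val) with hVdef
    have hVcard : Vfin.card = c.val - b.val := by
      have heq : Vfin = Finset.univ.filter
          (fun x : Fin n => x.val ∈ Finset.Ioc b.val c.val) := by
        ext x
        simp [hVdef, Finset.mem_Ioc]
      rw [heq, card_filter_val (fun a ha => by
        have := (Finset.mem_Ioc.1 ha).2
        exact lt_of_le_of_lt this c.isLt), Nat.card_Ioc]
    have hfpsubV : ∀ i ∈ Q, S.get i ≠ c → fpF i ⊆ Vfin := by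
      intro i hi hic w hw
      obtain ⟨hgb, hgc⟩ := hQget i hi
      have hgc' : (S.get i).val < c.val := lt_of_le_of_ne hgc (fun h => hic (Fin.val_injective h))
      rw [hfpF_mem] at hw
      obtain ⟨hw1, hw2⟩ := hw
      rw [dist_le_iff] at hw1
      simp only [hVdef, Finset.mem_filter, Finset.mem_univ, true_and]
      constructor
      · by_contra hcon
        push_neg at hcon
        have h5 : idx b hbI < i := by
          refine hF2 b hbI i (fun he => by rw [he] at hgb; omega) ?_
          rw [dist_le_iff]
          omega
        exact hw2 ⟨idx b hbI, h5, by rw [hidx1, dist_le_iff]; omega⟩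
      · by_contra hcon
        push_neg at hcon
        have h5 : idx c hc < i := by
          refine hF2 c hc i hic ?_
          rw [dist_le_iff]
          omega
        exact hw2 ⟨idx c hc, h5, by rw [hidx1, dist_le_iff]; omega⟩
    have hfpVne : ∀ i ∈ Q, 1 ≤ (fpF i ∩ Vfin).card := by
      intro i hi
      rw [Nat.one_le_iff_ne_zero, ← Nat.pos_iff_ne_zero, Finset.card_pos]
      by_cases hic : S.get i = c
      · have hieq : i = idx c hc := hgetinj _ _ (hic.trans (hidx1 c hc).symm)
        refine ⟨c, Finset.mem_inter.2 ⟨?_, ?_⟩⟩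
        · rw [hieq, hfpF_mem, hidx1]
          exact ⟨by simp [Nat.dist_self], hidx2 c hc⟩
        · simp [hVdef]
          omega
      · obtain ⟨w, hw⟩ := hfp_ne i
        exact ⟨w, Finset.mem_inter.2 ⟨hw, hfpsubV i hi hic hw⟩⟩
    have hcard_interval : ∀ lo len : ℕ, lo + len < n →
        (Finset.univ.filter (fun w : Fin n => lo ≤ w.val ∧ w.val ≤ lo + len)).card = len + 1 := by
      intro lo len hlt
      have heq : Finset.univ.filter (fun w : Fin n => lo ≤ w.val ∧ w.val ≤ lo + len)
          = Finset.univ.filter (fun x : Fin n => x.val ∈ Finset.Icc lo (lo + len)) := by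
        ext x
        simp [Finset.mem_Icc]
      rw [heq, card_filter_val (fun a ha => by
        have := (Finset.mem_Icc.1 ha).2
        omega), Nat.card_Icc]
      omega
    have hQlow : ∀ (R : Finset (Fin S.length)), R ⊆ Q →
        R.card ≤ ∑ i ∈ R, (fpF i ∩ Vfin).card := by
      intro R hR
      have h1 : R.card • 1 ≤ ∑ i ∈ R, (fpF i ∩ Vfin).card :=
        Finset.card_nsmul_le_sum R _ 1 (fun i hi => hfpVne i (hR hi))
      simpa using h1
    have hbonus : m + Q.card ≤ ∑ i ∈ T, (fpF i ∩ Vfin).card := by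
      by_cases hi0Q : i0 ∈ Q
      · have hu0 := hQget i0 hi0Q
        have hbig : m + 1 ≤ (fpF i0 ∩ Vfin).card := by
          by_cases hu0c : S.get i0 = c
          · have hsub : Finset.univ.filter
                (fun w : Fin n => (c.val - m) ≤ w.val ∧ w.val ≤ (c.val - m) + m)
                ⊆ fpF i0 ∩ Vfin := by
              intro w hw
              simp only [Finset.mem_filter, Finset.mem_univ, true_and] at hw
              have hwb : b.val ≤ w.val := by omega
              have hwc : w.val ≤ c.val := by omega
              refine Finset.mem_inter.2 ⟨(hfpF_mem _ _).2 ⟨?_, hB1 w hwb hwc⟩, ?_⟩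
              · rw [hu0c, dist_le_iff]
                omega
              · simp only [hVdef, Finset.mem_filter, Finset.mem_univ, true_and]
                omega
            have h2 := Finset.card_le_card hsub
            have h3 := c.isLt
            rw [hcard_interval (c.val - m) m (by omega)] at h2
            omega
          · have hu0lt : (S.get i0).val < c.val :=
              lt_of_le_of_ne hu0.2 (fun h => hu0c (Fin.val_injective h))
            have hfar : (S.get i0).val + m + 1 ≤ c.val := by
              by_contra hcon
              push_neg at hcon
              have h5 : idx c hc < i0 := hF2 c hc i0 hu0c (by rw [dist_le_iff]; omega)
              exact absurd hi0c (not_le.2 h5)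
            have hsub : Finset.univ.filter
                (fun w : Fin n => (S.get i0).val ≤ w.val ∧ w.val ≤ (S.get i0).val + m)
                ⊆ fpF i0 ∩ Vfin := by
              intro w hw
              simp only [Finset.mem_filter, Finset.mem_univ, true_and] at hw
              have hwb : b.val ≤ w.val := by
                have := hu0.1
                omega
              have hwc : w.val ≤ c.val := by omega
              refine Finset.mem_inter.2 ⟨(hfpF_mem _ _).2 ⟨?_, hB1 w hwb hwc⟩, ?_⟩
              · rw [dist_le_iff]
                omega
              · simp only [hVdef, Finset.mem_filter, Finset.mem_univ, true_and]
                constructor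
                · have := hu0.1
                  omega
                · omega
            have h2 := Finset.card_le_card hsub
            have h3 := c.isLt
            rw [hcard_interval (S.get i0).val m (by omega)] at h2
            omega
        have h6 : ∑ i ∈ Q, (fpF i ∩ Vfin).card ≤ ∑ i ∈ T, (fpF i ∩ Vfin).card :=
          Finset.sum_le_sum_of_subset (by rw [hTdef]; exact Finset.subset_insert _ _)
        have h7 : (fpF i0 ∩ Vfin).card + (Q.erase i0).card ≤ ∑ i ∈ Q, (fpF i ∩ Vfin).card := by
          rw [← Finset.add_sum_erase Q _ hi0Q]
          exact Nat.add_le_add le_rfl (hQlow _ (Finset.erase_subset _ _))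
        have h8 : (Q.erase i0).card = Q.card - 1 := Finset.card_erase_of_mem hi0Q
        have h9 : 1 ≤ Q.card := Finset.card_pos.2 ⟨i0, hi0Q⟩
        omega
      · have hi0eq : i0 = idx b hbI := by
          rcases Finset.mem_insert.1 hi0T with h | h
          · exact h
          · exact absurd h hi0Q
        have hbig : m ≤ (fpF i0 ∩ Vfin).card := by
          have hsub : Finset.univ.filter
              (fun w : Fin n => b.val + 1 ≤ w.val ∧ w.val ≤ (b.val + 1) + (m - 1))
              ⊆ fpF i0 ∩ Vfin := by
            intro w hw
            simp only [Finset.mem_filter, Finset.mem_univ, true_and] at hw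
            have hwb : b.val ≤ w.val := by omega
            have hwc : w.val ≤ c.val := by omega
            refine Finset.mem_inter.2 ⟨(hfpF_mem _ _).2 ⟨?_, hB1 w hwb hwc⟩, ?_⟩
            · rw [hi0eq, hidx1, dist_le_iff]
              omega
            · simp only [hVdef, Finset.mem_filter, Finset.mem_univ, true_and]
              omega
          have h2 := Finset.card_le_card hsub
          have h3 := c.isLt
          rw [hcard_interval (b.val + 1) (m - 1) (by omega)] at h2
          omega
        have h7 : ∑ i ∈ T, (fpF i ∩ Vfin).card
            = (fpF i0 ∩ Vfin).card + ∑ i ∈ Q, (fpF i ∩ Vfin).card := by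
          rw [hTdef, Finset.sum_insert hbnotinQ, hi0eq]
        have h8 := hQlow Q Finset.Subset.rfl
        omega
    have hsum : ∑ i ∈ T, (fpF i ∩ Vfin).card ≤ Vfin.card := by
      rw [← Finset.card_biUnion (fun i _ j _ hij =>
        Finset.disjoint_of_subset_left Finset.inter_subset_left
          (Finset.disjoint_of_subset_right Finset.inter_subset_left (hfp_disj i j hij)))]
      exact Finset.card_le_card (Finset.biUnion_subset.2 fun i _ => Finset.inter_subset_right)
    omega
  -- final assembly
  have hfib : (Finset.univ : Finset (Fin S.length)).card
      = ∑ c ∈ I, (Finset.univ.filter (fun i => κ i = c)).card :=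
    Finset.card_eq_sum_card_fiberwise (fun i _ => hκI i)
  have hlen : S.length = ∑ c ∈ I, (Finset.univ.filter (fun i => κ i = c)).card := by
    rw [← hfib]
    simp
  have hk1 : 1 ≤ I.card := Finset.card_pos.2 hne
  have hboundc : ∀ c ∈ I, ((Finset.univ.filter (fun i => κ i = c)).card : ℤ) ≤
      (if c = a1 then (1:ℤ) else ((c.val : ℤ) - ((predI I c).val : ℤ) - m)) := by
    intro c hc
    by_cases h : c = a1
    · rw [if_pos h, h]
      exact_mod_cast hfa1
    · rw [if_neg h]
      have h1 := hwin c hc h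
      have hblt : (predI I c).val < c.val := (predI_spec hne hc h).2.1
      push_cast
      omega
  have hstep1 : (S.length : ℤ) ≤
      ∑ c ∈ I, (if c = a1 then (1:ℤ) else ((c.val : ℤ) - ((predI I c).val : ℤ) - m)) := by
    rw [hlen]
    push_cast
    exact Finset.sum_le_sum hboundc
  rw [← Finset.add_sum_erase I _ (Finset.min'_mem I hne), ← ha1, if_pos rfl] at hstep1
  have herase : ∀ c ∈ I.erase a1,
      (if c = a1 then (1:ℤ) else ((c.val:ℤ) - ((predI I c).val:ℤ) - m))
        = ((c.val:ℤ) - ((predI I c).val:ℤ) - m) :=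
    fun c hcm => if_neg (Finset.mem_erase.1 hcm).1
  rw [Finset.sum_congr rfl herase] at hstep1
  have hpredsum : ∑ c ∈ I.erase a1, ((predI I c).val : ℤ) = ∑ y ∈ I.erase ak, (y.val : ℤ) := by
    refine Finset.sum_nbij' (i := fun c => predI I c) (j := fun y => succI I y)
      ?_ ?_ ?_ ?_ ?_
    · intro c hcm
      obtain ⟨hc1, hc2⟩ := Finset.mem_erase.1 hcm
      obtain ⟨hp1, hp2, _⟩ := predI_spec hne hc2 hc1
      exact Finset.mem_erase.2 ⟨ne_of_lt (lt_of_lt_of_le hp2 (Finset.le_max' I c hc2)), hp1⟩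
    · intro y hym
      obtain ⟨hy1, hy2⟩ := Finset.mem_erase.1 hym
      obtain ⟨hs1, hs2, _⟩ := succI_spec hne hy2 hy1
      exact Finset.mem_erase.2 ⟨(ne_of_lt (lt_of_le_of_lt (Finset.min'_le I y hy2) hs2)).symm, hs1⟩
    · intro c hcm
      obtain ⟨hc1, hc2⟩ := Finset.mem_erase.1 hcm
      exact succI_predI hne hc2 hc1
    · intro y hym
      obtain ⟨hy1, hy2⟩ := Finset.mem_erase.1 hym
      exact predI_succI hne hy2 hy1
    · intro c _
      rfl
  have hsum1 : ∑ c ∈ I.erase a1, ((c.val : ℤ)) = (∑ c ∈ I, ((c.val:ℤ))) - a1.val := by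
    have h := Finset.add_sum_erase I (fun c : Fin n => ((c.val : ℤ))) (Finset.min'_mem I hne)
    rw [← ha1] at h
    linarith
  have hsum2 : ∑ c ∈ I.erase ak, ((c.val : ℤ)) = (∑ c ∈ I, ((c.val:ℤ))) - ak.val := by
    have h := Finset.add_sum_erase I (fun c : Fin n => ((c.val : ℤ))) (Finset.max'_mem I hne)
    rw [← hak] at h
    linarith
  have hcount : ((I.erase a1).card : ℤ) = (I.card : ℤ) - 1 := by
    rw [Finset.card_erase_of_mem (Finset.min'_mem I hne)]
    push_cast [Nat.cast_sub hk1]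
    ring
  have hsplit : ∑ c ∈ I.erase a1, ((c.val:ℤ) - ((predI I c).val:ℤ) - m)
      = (∑ c ∈ I.erase a1, ((c.val:ℤ))) - (∑ c ∈ I.erase a1, ((predI I c).val : ℤ))
        - ((I.erase a1).card : ℤ) * m := by
    rw [Finset.sum_sub_distrib, Finset.sum_sub_distrib, Finset.sum_const]
    push_cast
    ring
  rw [hsplit, hpredsum, hsum1, hsum2, hcount] at hstep1
  linarith

end Upper
/-- for an independent set `I` of `P_n^m` with `min(I) ≤ m+1` and
`max(I) ≥ n-m` (vertices `0`-based: `j : Fin n` represents `j+1 ∈ [n]`),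
`γ_gr(P_n^m, I) = max(I) - min(I) + 1 - (|I|-1)·m`. -/
theorem stmt11 (n m : ℕ) (hm : 1 ≤ m) (hn : m + 2 ≤ n)
    (I : Finset (Fin n)) (hne : I.Nonempty) (hind : IsIndep (pathPow n m) ↑I)
    (hmin : ((I.min' hne).val : ℤ) + 1 ≤ m + 1)
    (hmax : (n : ℤ) - m ≤ ((I.max' hne).val : ℤ) + 1) :
    (gammaGrOn (pathPow n m) ↑I : ℤ) =
      ((I.max' hne).val : ℤ) - ((I.min' hne).val : ℤ) + 1 - ((I.card : ℤ) - 1) * m := by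
  have hmin' : (I.min' hne).val ≤ m := by exact_mod_cast by omega
  have hmax' : n ≤ (I.max' hne).val + 1 + m := by
    have h := (I.max' hne).isLt
    omega
  obtain ⟨hleg, hsf⟩ := seqS_legal (hne := hne) hm hn hind hmin' hmax'
  have hlen := seqS_length (hne := hne) hind
  have hmem : (seqS m I hne).length ∈
      {k | ∃ S : List (Fin n), IsLegal (pathPow n m) S ∧
        selfFoot (pathPow n m) S = ↑I ∧ S.length = k} :=
    ⟨seqS m I hne, hleg, hsf, rfl⟩
  have hub : ∀ k ∈ {k | ∃ S : List (Fin n), IsLegal (pathPow n m) S ∧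
      selfFoot (pathPow n m) S = ↑I ∧ S.length = k}, k ≤ (seqS m I hne).length := by
    rintro k ⟨S, hS, hSsf, rfl⟩
    have h1 := upper_bound hm hn I hne hind hmin' hmax' S hS hSsf
    rw [← hlen] at h1
    exact_mod_cast h1
  have hsup : gammaGrOn (pathPow n m) ↑I = (seqS m I hne).length := by
    unfold gammaGrOn
    exact le_antisymm (csSup_le ⟨_, hmem⟩ hub) (le_csSup ⟨(seqS m I hne).length, hub⟩ hmem)
  rw [hsup]
  exact hlen
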